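/- The probability that a standard bit mutation with mutation probability p (0 < p < 1) of a bit string with fewer than i ones creates a string with exactly i ones is at most p·(n-i+1)·e^{(pn)²/4 + 1}. -/

import Mathlib

open Finset

private lemma choose_le_pow_div_fact (m k : ℕ) :
    (m.choose k : ℝ) ≤ (m : ℝ) ^ k / k.factorial := by
  rw [le_div_iff₀ (by positivity)]
  have h : m.choose k * k.factorial ≤ m ^ k := by
    rw [mul_comm, ← Nat.descFactorial_eq_factorial_mul_choose]
    exact Nat.descFactorial_le_pow m k
  exact_mod_cast h

private lemma pow_div_fact_le_exp (x : ℝ) (hx : 0 ≤ x) (k : ℕ) :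
    x ^ k / k.factorial ≤ Real.exp x := by
  calc x ^ k / k.factorial ≤ ∑ j ∈ range (k + 1), x ^ j / j.factorial :=
        Finset.single_le_sum (f := fun j => x ^ j / (j.factorial : ℝ))
          (fun j _ => by positivity) (self_mem_range_succ k)
    _ ≤ Real.exp x := Real.sum_le_exp_of_nonneg hx _

private lemma choose_mul_choose_le (a b k j : ℕ) (hk : j + j ≤ k) (h : k - j + j = k) :
    b.choose (k - j) * a.choose j ≤ (b + a).choose k := by
  rw [Nat.add_choose_eq]
  exact Finset.single_le_sum (f := fun ij : ℕ × ℕ => b.choose ij.1 * a.choose ij.2)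
    (a := (k - j, j)) (fun _ _ => Nat.zero_le _) (Finset.HasAntidiagonal.mem_antidiagonal.mpr (by simpa using h))

private lemma jump_sum_le_one (p : ℝ) (hp0 : 0 < p) (hp1 : p < 1)
    (n i d : ℕ) (hd : 1 ≤ d) (hdi : d ≤ i) (hin : i ≤ n) :
    (∑ ℓ ∈ Finset.range (i - d + 1),
        (Nat.choose (n - i + d) (d + ℓ) : ℝ) * Nat.choose (i - d) ℓ
          * p ^ (d + 2 * ℓ) * (1 - p) ^ (n - d - 2 * ℓ)) ≤ 1 := by
  have hp1' : 0 ≤ 1 - p := by linarith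
  set f : ℕ → ℝ := fun k => (n.choose k : ℝ) * p ^ k * (1 - p) ^ (n - k) with hf
  have hf0 : ∀ k, 0 ≤ f k := fun k => by positivity
  have step1 : (∑ ℓ ∈ Finset.range (i - d + 1),
        (Nat.choose (n - i + d) (d + ℓ) : ℝ) * Nat.choose (i - d) ℓ
          * p ^ (d + 2 * ℓ) * (1 - p) ^ (n - d - 2 * ℓ))
      ≤ ∑ ℓ ∈ Finset.range (i - d + 1), f (d + 2 * ℓ) := by
    apply Finset.sum_le_sum
    intro ℓ _
    have hsub : n - d - 2 * ℓ = n - (d + 2 * ℓ) := by omega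
    have hcc : ((n - i + d).choose (d + ℓ) : ℝ) * (i - d).choose ℓ ≤ (n.choose (d + 2 * ℓ) : ℝ) := by
      have := choose_mul_choose_le (i - d) (n - i + d) (d + 2 * ℓ) ℓ (by omega) (by omega)
      have hn : n - i + d + (i - d) = n := by omega
      have hkk : d + 2 * ℓ - ℓ = d + ℓ := by omega
      rw [hn, hkk] at this
      exact_mod_cast this
    rw [hsub, hf]
    calc ((n - i + d).choose (d + ℓ) : ℝ) * (i - d).choose ℓ * p ^ (d + 2 * ℓ)
          * (1 - p) ^ (n - (d + 2 * ℓ))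
        ≤ (n.choose (d + 2 * ℓ) : ℝ) * p ^ (d + 2 * ℓ) * (1 - p) ^ (n - (d + 2 * ℓ)) := by
          apply mul_le_mul_of_nonneg_right _ (by positivity)
          exact mul_le_mul_of_nonneg_right hcc (by positivity)
      _ = f (d + 2 * ℓ) := rfl
  have step2 : ∑ ℓ ∈ Finset.range (i - d + 1), f (d + 2 * ℓ)
      = ∑ k ∈ (Finset.range (i - d + 1)).image (fun ℓ => d + 2 * ℓ), f k :=
    (Finset.sum_image (by intro x _ y _ h; simp only at h; omega)).symm
  have step3 : ∑ k ∈ (Finset.range (i - d + 1)).image (fun ℓ => d + 2 * ℓ), f k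
      ≤ ∑ k ∈ Finset.range (n + 2 * i + 2), f k := by
    apply Finset.sum_le_sum_of_subset_of_nonneg
    · intro k hk
      simp only [Finset.mem_image, Finset.mem_range] at hk ⊢
      obtain ⟨ℓ, hℓ, rfl⟩ := hk
      omega
    · intro k _ _; exact hf0 k
  have step4 : ∑ k ∈ Finset.range (n + 2 * i + 2), f k = ∑ k ∈ Finset.range (n + 1), f k := by
    apply (Finset.sum_subset (Finset.range_subset_range.mpr (by omega)) _).symm
    intro k hk hk'
    simp only [Finset.mem_range] at hk hk'
    have : n < k := by omega
    simp [hf, Nat.choose_eq_zero_of_lt this]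
  have step5 : ∑ k ∈ Finset.range (n + 1), f k = 1 := by
    have key : ∑ m ∈ Finset.range (n + 1), p ^ m * (1 - p) ^ (n - m) * (n.choose m : ℝ) = 1 := by
      rw [← add_pow]; norm_num
    calc ∑ k ∈ Finset.range (n + 1), f k
        = ∑ m ∈ Finset.range (n + 1), p ^ m * (1 - p) ^ (n - m) * (n.choose m : ℝ) := by
          apply Finset.sum_congr rfl
          intro k _
          simp only [hf]
          ring
      _ = 1 := key
  calc (∑ ℓ ∈ Finset.range (i - d + 1),
        (Nat.choose (n - i + d) (d + ℓ) : ℝ) * Nat.choose (i - d) ℓ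
          * p ^ (d + 2 * ℓ) * (1 - p) ^ (n - d - 2 * ℓ))
      ≤ ∑ ℓ ∈ Finset.range (i - d + 1), f (d + 2 * ℓ) := step1
    _ = ∑ k ∈ (Finset.range (i - d + 1)).image (fun ℓ => d + 2 * ℓ), f k := step2
    _ ≤ ∑ k ∈ Finset.range (n + 2 * i + 2), f k := step3
    _ = ∑ k ∈ Finset.range (n + 1), f k := step4
    _ = 1 := step5

set_option maxHeartbeats 1000000 in
/-- The probability that a standard bit mutation with mutation probability `p`
of a bit string with `i - d < i` ones (for any `d ≥ 1`) creates a string with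
exactly `i` ones is at most `p (n-i+1) e^{(pn)²/4 + 1}`. -/
theorem jump_to_level_bound (p : ℝ) (hp0 : 0 < p) (hp1 : p < 1)
    (n i d : ℕ) (hd : 1 ≤ d) (hdi : d ≤ i) (hin : i ≤ n) :
    (∑ ℓ ∈ Finset.range (i - d + 1),
        (Nat.choose (n - i + d) (d + ℓ) : ℝ) * Nat.choose (i - d) ℓ
          * p ^ (d + 2 * ℓ) * (1 - p) ^ (n - d - 2 * ℓ))
      ≤ p * ((n : ℝ) - i + 1) * Real.exp ((p * n) ^ 2 / 4 + 1) := by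
  have hp1' : 0 ≤ 1 - p := by linarith
  have hiR : (i : ℝ) ≤ n := by exact_mod_cast hin
  set c : ℝ := p * ((n : ℝ) - i + 1) with hc
  have hc0 : 0 < c := by
    apply mul_pos hp0; linarith
  have hrhs : p * ((n : ℝ) - i + 1) * Real.exp ((p * n) ^ 2 / 4 + 1)
      = (c * Real.exp 1) * Real.exp ((p * n) ^ 2 / 4) := by
    rw [Real.exp_add]; ring
  by_cases hce : c * Real.exp 1 ≤ 1
  · -- analytic chain
    set a : ℕ := i - d with ha
    set b : ℕ := n - i + d with hb
    have hbR : (b : ℝ) = (n : ℝ) - i + d := by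
      rw [hb]; push_cast [Nat.cast_sub hin]; ring
    have haR : (a : ℝ) = (i : ℝ) - d := by
      rw [ha]; push_cast [Nat.cast_sub hdi]; ring
    have habn : (a : ℝ) + b = n := by rw [hbR, haR]; ring
    set x : ℝ := (a : ℝ) * b * p ^ 2 with hx
    have hx0 : 0 ≤ x := by positivity
    have step1 : (∑ ℓ ∈ Finset.range (i - d + 1),
          (Nat.choose (n - i + d) (d + ℓ) : ℝ) * Nat.choose (i - d) ℓ
            * p ^ (d + 2 * ℓ) * (1 - p) ^ (n - d - 2 * ℓ))
        ≤ ∑ ℓ ∈ Finset.range (a + 1),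
            ((p * b) ^ d / d.factorial) * (x ^ ℓ / (ℓ.factorial * ℓ.factorial)) := by
      apply Finset.sum_le_sum
      intro ℓ _
      have h1 : (b.choose (d + ℓ) : ℝ) ≤ (b : ℝ) ^ (d + ℓ) / ((d.factorial : ℝ) * ℓ.factorial) := by
        refine (choose_le_pow_div_fact b (d + ℓ)).trans ?_
        apply div_le_div_of_nonneg_left (by positivity) (by positivity)
        exact_mod_cast Nat.le_of_dvd (Nat.factorial_pos _)
          (Nat.factorial_mul_factorial_dvd_factorial_add d ℓ)
      have h2 : (a.choose ℓ : ℝ) ≤ (a : ℝ) ^ ℓ / ℓ.factorial := choose_le_pow_div_fact a ℓ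
      have h3 : (1 - p) ^ (n - d - 2 * ℓ) ≤ 1 := pow_le_one₀ hp1' (by linarith)
      calc (b.choose (d + ℓ) : ℝ) * a.choose ℓ * p ^ (d + 2 * ℓ) * (1 - p) ^ (n - d - 2 * ℓ)
          ≤ ((b : ℝ) ^ (d + ℓ) / ((d.factorial : ℝ) * ℓ.factorial))
            * ((a : ℝ) ^ ℓ / ℓ.factorial) * p ^ (d + 2 * ℓ) * 1 := by
            gcongr <;> positivity
        _ = ((p * b) ^ d / d.factorial) * (x ^ ℓ / (ℓ.factorial * ℓ.factorial)) := by
            rw [hx, pow_add, two_mul, pow_add, pow_add]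
            have hd0 : (d.factorial : ℝ) ≠ 0 := by positivity
            have hl0 : (ℓ.factorial : ℝ) ≠ 0 := by positivity
            field_simp
            ring
    have step2 : ∑ ℓ ∈ Finset.range (a + 1),
          ((p * b) ^ d / d.factorial) * (x ^ ℓ / (ℓ.factorial * ℓ.factorial))
        ≤ ((p * b) ^ d / d.factorial) * Real.exp x := by
      rw [← Finset.mul_sum]
      apply mul_le_mul_of_nonneg_left _ (by positivity)
      calc ∑ ℓ ∈ Finset.range (a + 1), x ^ ℓ / ((ℓ.factorial : ℝ) * ℓ.factorial)
          ≤ ∑ ℓ ∈ Finset.range (a + 1), x ^ ℓ / (ℓ.factorial : ℝ) := by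
            apply Finset.sum_le_sum
            intro ℓ _
            apply div_le_div_of_nonneg_left (by positivity) (by positivity)
            have h1 : (1 : ℝ) ≤ (ℓ.factorial : ℝ) := by
              exact_mod_cast Nat.one_le_iff_ne_zero.mpr (Nat.factorial_ne_zero ℓ)
            nlinarith
        _ ≤ Real.exp x := Real.sum_le_exp_of_nonneg hx0 _
    have hxle : x ≤ (p * n) ^ 2 / 4 := by
      rw [hx]
      have hn2 : (p * (n : ℝ)) ^ 2 = (p * ((a : ℝ) + b)) ^ 2 := by rw [habn]
      rw [hn2]
      nlinarith [sq_nonneg (((a : ℝ) - b) * p)]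
    have hpre : (p * b) ^ d / d.factorial ≤ c * Real.exp 1 := by
      have hbd : (b : ℝ) ≤ d * ((n : ℝ) - i + 1) := by
        rw [hbR]
        have h1 : (1 : ℝ) ≤ d := by exact_mod_cast hd
        nlinarith [hiR]
      have hpb : p * b ≤ c * d := by
        rw [hc]
        nlinarith [hp0.le]
      have h4 : (p * b) ^ d ≤ (c * d) ^ d := by
        apply pow_le_pow_left₀ (by positivity) hpb
      have h5 : ((d : ℝ)) ^ d / d.factorial ≤ Real.exp d :=
        pow_div_fact_le_exp d (Nat.cast_nonneg d) d
      have h6 : (c * d) ^ d / d.factorial = c ^ d * ((d : ℝ) ^ d / d.factorial) := by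
        rw [mul_pow]; ring
      have hexp1 : Real.exp (d : ℝ) = Real.exp 1 ^ d := by
        rw [← Real.exp_nat_mul]; norm_num
      calc (p * b) ^ d / d.factorial ≤ (c * d) ^ d / d.factorial := by
            gcongr
        _ = c ^ d * ((d : ℝ) ^ d / d.factorial) := h6
        _ ≤ c ^ d * Real.exp (d : ℝ) := by
            apply mul_le_mul_of_nonneg_left h5 (by positivity)
        _ = (c * Real.exp 1) ^ d := by rw [hexp1]; exact (mul_pow c (Real.exp 1) d).symm
        _ ≤ c * Real.exp 1 := pow_le_of_le_one (by positivity) hce (by omega)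
    calc (∑ ℓ ∈ Finset.range (i - d + 1),
          (Nat.choose (n - i + d) (d + ℓ) : ℝ) * Nat.choose (i - d) ℓ
            * p ^ (d + 2 * ℓ) * (1 - p) ^ (n - d - 2 * ℓ))
        ≤ ((p * b) ^ d / d.factorial) * Real.exp x := le_trans step1 step2
      _ ≤ (c * Real.exp 1) * Real.exp ((p * n) ^ 2 / 4) := by
          apply mul_le_mul hpre (Real.exp_le_exp.mpr hxle) (Real.exp_pos x).le
            (by positivity)
      _ = p * ((n : ℝ) - i + 1) * Real.exp ((p * n) ^ 2 / 4 + 1) := hrhs.symm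
  · push_neg at hce
    calc (∑ ℓ ∈ Finset.range (i - d + 1),
          (Nat.choose (n - i + d) (d + ℓ) : ℝ) * Nat.choose (i - d) ℓ
            * p ^ (d + 2 * ℓ) * (1 - p) ^ (n - d - 2 * ℓ))
        ≤ 1 := jump_sum_le_one p hp0 hp1 n i d hd hdi hin
      _ ≤ (c * Real.exp 1) * Real.exp ((p * n) ^ 2 / 4) := by
          nlinarith [Real.one_le_exp (by positivity : (0:ℝ) ≤ (p * n) ^ 2 / 4)]
      _ = p * ((n : ℝ) - i + 1) * Real.exp ((p * n) ^ 2 / 4 + 1) := hrhs.symm
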